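/- (Quantum Singleton bound for quotient space quantum codes) Let n, k, l, d be natural numbers with d ≥ 1, n ≡ k (mod 2), and l even. Let C be an 𝔽₂-subspace of V with C ⊆ C^⊥ₛ and dim_{𝔽₂} C = n − k. Assume either (a) k ≥ 1 and d ≤ d_m := min{w_Q(v) : v ∈ C^⊥ₛ \ C}, or (b) k = 0 and l ≥ 2. Let C(d−1) := {c ∈ C : w_Q(c) ≤ d−1}. Suppose Ω ⊆ V/C^⊥ₛ is a set of cosets with |Ω| = 2^l whose pairwise quotient distances are all ≥ d, and such that all elements of the cosets in Ω lie in a single coset of C(d−1)^⊥ₛ in V. Then n ≥ k + l + 2d − 2. -/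

import Mathlib

open Finset

/-- `V = 𝔽₂ⁿ × 𝔽₂ⁿ`, elements written `(a|b)`. -/
abbrev Vn (n : ℕ) : Type := (Fin n → ZMod 2) × (Fin n → ZMod 2)

/-- The symplectic inner product `((a|b),(a'|b'))ₛ = a·b' + a'·b`. -/
def symp {n : ℕ} (v w : Vn n) : ZMod 2 :=
  (∑ i, v.1 i * w.2 i) + (∑ i, w.1 i * v.2 i)

lemma symp_add_left {n : ℕ} (a b s : Vn n) : symp (a + b) s = symp a s + symp b s := by
  simp only [symp, Prod.fst_add, Prod.snd_add, Pi.add_apply, add_mul, mul_add,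
    Finset.sum_add_distrib]
  ring

lemma symp_smul_left {n : ℕ} (c : ZMod 2) (v s : Vn n) : symp (c • v) s = c * symp v s := by
  simp only [symp, Prod.smul_fst, Prod.smul_snd, Pi.smul_apply, smul_eq_mul, mul_add,
    Finset.mul_sum]
  congr 1
  · exact Finset.sum_congr rfl fun i _ => by ring
  · exact Finset.sum_congr rfl fun i _ => by ring

/-- The symplectic orthogonal `S^⊥ₛ` of a subset `S ⊆ V`, as an `𝔽₂`-subspace of `V`. -/
def sympOrtho {n : ℕ} (S : Set (Vn n)) : Submodule (ZMod 2) (Vn n) where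
  carrier := {v | ∀ s ∈ S, symp v s = 0}
  zero_mem' := by intro s hs; simp [symp]
  add_mem' := by
    intro a b ha hb s hs
    rw [Set.mem_setOf_eq] at *
    rw [symp_add_left, ha s hs, hb s hs, add_zero]
  smul_mem' := by
    intro c v hv s hs
    rw [Set.mem_setOf_eq] at *
    rw [symp_smul_left, hv s hs, mul_zero]

/-- `ε : 𝔽₂ → ℂ`, `ε(0) = 1`, `ε(1) = -1`. -/
def eps (x : ZMod 2) : ℂ := if x = 0 then 1 else -1

/-- Quantum weight of `(a|b)`: number of positions `i` with `(aᵢ,bᵢ) ≠ (0,0)`. -/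
def wQ {n : ℕ} (v : Vn n) : ℕ :=
  (Finset.univ.filter fun i => (v.1 i, v.2 i) ≠ ((0 : ZMod 2), (0 : ZMod 2))).card

/-- Quotient minimum norm `‖x̄‖ = min_{v ∈ x̄} w_Q(v)` on `V ⧸ H`. -/
noncomputable def qnorm {n : ℕ} (H : Submodule (ZMod 2) (Vn n)) (x : Vn n ⧸ H) : ℕ :=
  sInf {m | ∃ v : Vn n, (Submodule.Quotient.mk v : Vn n ⧸ H) = x ∧ wQ v = m}

/-- Quotient distance `d(x̄,ȳ) = ‖x̄ - ȳ‖` on `V ⧸ H`. -/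
noncomputable def qdist {n : ℕ} (H : Submodule (ZMod 2) (Vn n)) (x y : Vn n ⧸ H) : ℕ :=
  qnorm H (x - y)

/-- The operator `W(a,b)` acting on functions `𝔽₂ⁿ → ℂ`: `(W(a,b)f)(x) = ε(b·x)·f(x+a)`. -/
def Wop {n : ℕ} (a b : Fin n → ZMod 2) (f : (Fin n → ZMod 2) → ℂ) : (Fin n → ZMod 2) → ℂ :=
  fun x => eps (∑ i, b i * x i) * f (x + a)

/-- The joint eigenspace `Q(i)` of the operators `W(c₁,c₂)`, `(c₁|c₂) ∈ C`. -/
def Qset {n : ℕ} (C : Submodule (ZMod 2) (Vn n)) (i : Vn n) : Set ((Fin n → ZMod 2) → ℂ) :=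
  {f | ∀ c ∈ C, ∀ x, Wop c.1 c.2 f x = eps (symp i c) * f x}

-- new material
lemma symp_comm {n : ℕ} (v w : Vn n) : symp v w = symp w v := by
  simp only [symp]; exact add_comm _ _

lemma symp_add_right {n : ℕ} (s a b : Vn n) : symp s (a + b) = symp s a + symp s b := by
  rw [symp_comm, symp_add_left, symp_comm a, symp_comm b]

lemma symp_smul_right {n : ℕ} (c : ZMod 2) (s v : Vn n) : symp s (c • v) = c * symp s v := by
  rw [symp_comm, symp_smul_left, symp_comm]

lemma symp_single_left {n : ℕ} (v : Vn n) (i : Fin n) :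
    symp v (Pi.single i 1, 0) = v.2 i := by
  simp [symp, Pi.single_apply, ite_mul]

lemma symp_single_right {n : ℕ} (v : Vn n) (i : Fin n) :
    symp v (0, Pi.single i 1) = v.1 i := by
  simp [symp, Pi.single_apply, mul_ite]

def sympBilin (n : ℕ) : LinearMap.BilinForm (ZMod 2) (Vn n) :=
  LinearMap.mk₂ (ZMod 2) symp symp_add_left symp_smul_left symp_add_right symp_smul_right

@[simp] lemma sympBilin_apply {n : ℕ} (v w : Vn n) : sympBilin n v w = symp v w := rfl

lemma sympBilin_refl {n : ℕ} : (sympBilin n).IsRefl := by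
  intro x y h
  simpa [symp_comm y x] using h

lemma sympBilin_nondeg {n : ℕ} : (sympBilin n).Nondegenerate := by
  refine LinearMap.BilinForm.Nondegenerate.ofSeparatingLeft ?_
  intro v hv
  ext i
  · simpa using symp_single_right v i ▸ hv (0, Pi.single i 1)
  · simpa using symp_single_left v i ▸ hv (Pi.single i 1, 0)

lemma sympOrtho_eq_orthogonal {n : ℕ} (U : Submodule (ZMod 2) (Vn n)) :
    sympOrtho (U : Set (Vn n)) = (sympBilin n).orthogonal U := by
  ext v
  constructor
  · intro hv s hs
    simpa [LinearMap.BilinForm.IsOrtho, symp_comm] using hv s hs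
  · intro hv s hs
    have := hv s hs
    simpa [LinearMap.BilinForm.IsOrtho, symp_comm] using this

lemma finrank_Vn (n : ℕ) : Module.finrank (ZMod 2) (Vn n) = n + n := by
  rw [Module.finrank_prod, Module.finrank_fintype_fun_eq_card, Fintype.card_fin]

lemma finrank_add_finrank_sympOrtho {n : ℕ} (U : Submodule (ZMod 2) (Vn n)) :
    Module.finrank (ZMod 2) U + Module.finrank (ZMod 2) (sympOrtho (U : Set (Vn n))) = n + n := by
  rw [sympOrtho_eq_orthogonal, LinearMap.BilinForm.finrank_add_finrank_orthogonal sympBilin_refl,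
    LinearMap.BilinForm.orthogonal_top_eq_bot sympBilin_nondeg, inf_bot_eq, finrank_bot,
    add_zero, finrank_Vn]

lemma sympOrtho_anti {n : ℕ} {S S' : Set (Vn n)} (h : S ⊆ S') :
    sympOrtho S' ≤ sympOrtho S := fun _ hv s hs => hv s (h hs)

lemma sympOrtho_span {n : ℕ} (S : Set (Vn n)) :
    sympOrtho S = sympOrtho ((Submodule.span (ZMod 2) S : Submodule (ZMod 2) (Vn n)) : Set (Vn n)) := by
  refine le_antisymm ?_ (sympOrtho_anti Submodule.subset_span)
  intro v hv s hs
  induction hs using Submodule.span_induction with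
  | mem x hx => exact hv x hx
  | zero => simp [symp]
  | add x y _ _ hx hy => rw [symp_add_right, hx, hy, add_zero]
  | smul c x _ hx => rw [symp_smul_right, hx, mul_zero]

lemma sympOrtho_sup {n : ℕ} (U U' : Submodule (ZMod 2) (Vn n)) :
    sympOrtho ((U ⊔ U' : Submodule (ZMod 2) (Vn n)) : Set (Vn n)) =
      sympOrtho (U : Set (Vn n)) ⊓ sympOrtho (U' : Set (Vn n)) := by
  refine le_antisymm (le_inf (sympOrtho_anti ?_) (sympOrtho_anti ?_)) ?_
  · exact_mod_cast le_sup_left (a := U) (b := U')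
  · exact_mod_cast le_sup_right (a := U) (b := U')
  · rintro v ⟨h1, h2⟩ s hs
    obtain ⟨a, ha, b, hb, rfl⟩ := Submodule.mem_sup.1 hs
    rw [symp_add_right, h1 a ha, h2 b hb, add_zero]

/-- The subspace of vectors supported (in both halves) inside `T`. -/
def Ksub (n : ℕ) (T : Finset (Fin n)) : Submodule (ZMod 2) (Vn n) where
  carrier := {v | ∀ i ∉ T, v.1 i = 0 ∧ v.2 i = 0}
  zero_mem' := by intro i _; simp
  add_mem' := by
    intro a b ha hb i hi
    obtain ⟨ha1, ha2⟩ := ha i hi; obtain ⟨hb1, hb2⟩ := hb i hi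
    simp [ha1, ha2, hb1, hb2]
  smul_mem' := by
    intro c v hv i hi
    obtain ⟨h1, h2⟩ := hv i hi
    simp [h1, h2]

lemma mem_Ksub {n : ℕ} {T : Finset (Fin n)} {v : Vn n} :
    v ∈ Ksub n T ↔ ∀ i ∉ T, v.1 i = 0 ∧ v.2 i = 0 := Iff.rfl

lemma Ksub_mono {n : ℕ} {T T' : Finset (Fin n)} (h : T ⊆ T') : Ksub n T ≤ Ksub n T' :=
  fun v hv i hi => hv i (fun hiT => hi (h hiT))

lemma wQ_le_card_of_mem_Ksub {n : ℕ} {T : Finset (Fin n)} {v : Vn n} (hv : v ∈ Ksub n T) :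
    wQ v ≤ T.card := by
  refine Finset.card_le_card ?_
  intro i hi
  simp only [Finset.mem_filter, Finset.mem_univ, true_and] at hi
  by_contra hiT
  obtain ⟨h1, h2⟩ := hv i hiT
  exact hi (by rw [h1, h2])

lemma sympOrtho_Ksub {n : ℕ} (T : Finset (Fin n)) :
    sympOrtho ((Ksub n T : Submodule (ZMod 2) (Vn n)) : Set (Vn n)) = Ksub n Tᶜ := by
  ext v
  constructor
  · intro hv i hi
    rw [Finset.mem_compl, not_not] at hi
    constructor
    · have h1 : ((0 : Fin n → ZMod 2), Pi.single i (1 : ZMod 2)) ∈ Ksub n T := by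
        intro j hj
        refine ⟨rfl, ?_⟩
        exact Pi.single_eq_of_ne (by rintro rfl; exact hj hi) 1
      simpa [symp_single_right] using hv _ h1
    · have h1 : ((Pi.single i (1 : ZMod 2)), (0 : Fin n → ZMod 2)) ∈ Ksub n T := by
        intro j hj
        refine ⟨?_, rfl⟩
        exact Pi.single_eq_of_ne (by rintro rfl; exact hj hi) 1
      simpa [symp_single_left] using hv _ h1
  · intro hv s hs
    simp only [symp]
    rw [Finset.sum_eq_zero, Finset.sum_eq_zero, add_zero]
    · intro i _
      by_cases hiT : i ∈ T
      · have := (hv i (by simpa using hiT)).2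
        rw [this, mul_zero]
      · rw [(hs i hiT).1, zero_mul]
    · intro i _
      by_cases hiT : i ∈ T
      · have := (hv i (by simpa using hiT)).1
        rw [this, zero_mul]
      · rw [(hs i hiT).2, mul_zero]

lemma finrank_Ksub_add_compl {n : ℕ} (T : Finset (Fin n)) :
    Module.finrank (ZMod 2) (Ksub n T) + Module.finrank (ZMod 2) (Ksub n Tᶜ) = n + n := by
  have := finrank_add_finrank_sympOrtho (Ksub n T)
  rwa [sympOrtho_Ksub] at this

lemma le_finrank_Ksub {n : ℕ} (T : Finset (Fin n)) :
    2 * T.card ≤ Module.finrank (ZMod 2) (Ksub n T) := by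
  classical
  let f : ((↑T → ZMod 2) × (↑T → ZMod 2)) →ₗ[ZMod 2] Ksub n T :=
    { toFun := fun g => ⟨((fun i => if h : i ∈ T then g.1 ⟨i, h⟩ else 0),
        (fun i => if h : i ∈ T then g.2 ⟨i, h⟩ else 0)), by
          intro i hi
          constructor <;> · simp only [dif_neg hi]⟩
      map_add' := by
        intro a b
        apply Subtype.ext
        refine Prod.ext (funext fun i => ?_) (funext fun i => ?_) <;>
        · simp only [Submodule.coe_add, Prod.fst_add, Prod.snd_add, Pi.add_apply]
          split <;> simp
      map_smul' := by
        intro c a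
        apply Subtype.ext
        refine Prod.ext (funext fun i => ?_) (funext fun i => ?_) <;>
        · simp only [SetLike.val_smul, Prod.smul_fst, Prod.smul_snd, Pi.smul_apply,
            smul_eq_mul, RingHom.id_apply]
          split <;> simp }
  have hf : Function.Injective f := by
    intro a b hab
    have h1 := congrArg (fun x : Ksub n T => (x : Vn n).1) hab
    have h2 := congrArg (fun x : Ksub n T => (x : Vn n).2) hab
    refine Prod.ext (funext fun i => ?_) (funext fun i => ?_)
    · have := congrFun h1 i
      simpa [f, dif_pos i.2] using this
    · have := congrFun h2 i
      simpa [f, dif_pos i.2] using this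
  have := LinearMap.finrank_le_finrank_of_injective hf
  rw [Module.finrank_prod, Module.finrank_fintype_fun_eq_card, Fintype.card_coe] at this
  omega

set_option synthInstance.maxHeartbeats 1000000 in
set_option maxHeartbeats 1000000 in
lemma key_aux {n : ℕ} (k l e : ℕ) (Cp N W : Submodule (ZMod 2) (Vn n))
    (hNW : N = sympOrtho (W : Set (Vn n)))
    (hCpN : Cp ≤ N) (hWCp : W ≤ Cp)
    (hCp : Module.finrank (ZMod 2) Cp = n + k)
    (hlowW : ∀ v : Vn n, v ∈ Cp → wQ v ≤ e → v ∈ W)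
    (Ω : Set (Vn n ⧸ Cp)) (hcard : Nat.card Ω = 2 ^ l)
    (hdist : ∀ x ∈ Ω, ∀ y ∈ Ω, x ≠ y → e + 1 ≤ qdist Cp x y)
    (w0 : Vn n) (hw0 : ∀ v : Vn n, (Submodule.Quotient.mk v : Vn n ⧸ Cp) ∈ Ω → v - w0 ∈ N)
    (T : Finset (Fin n)) (hT : T.card ≤ e) :
    l + k + Module.finrank (ZMod 2) (Ksub n T) + Module.finrank (ZMod 2) ↥(Ksub n Tᶜ ⊓ W)
      ≤ n + Module.finrank (ZMod 2) ↥(Ksub n T ⊓ W) := by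
  classical
  have hWN : W ≤ N := hWCp.trans hCpN
  set M := Cp ⊔ (Ksub n T ⊓ N) with hM
  have hMN : M ≤ N := sup_le hCpN inf_le_right
  have hrep : ∀ x : Ω, ∃ v : Vn n, (Submodule.Quotient.mk v : Vn n ⧸ Cp) = ↑x :=
    fun x => Submodule.Quotient.mk_surjective Cp ↑x
  choose rep hrepx using hrep
  have hrepN : ∀ x : Ω, rep x - w0 ∈ N := fun x => hw0 (rep x) (by rw [hrepx x]; exact x.2)
  let φ : Ω → ↥(N.map M.mkQ) := fun x =>
    ⟨M.mkQ (rep x - w0), Submodule.mem_map_of_mem (hrepN x)⟩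
  have hφ : Function.Injective φ := by
    intro x y hxy
    have h1 : M.mkQ (rep x - w0) = M.mkQ (rep y - w0) := Subtype.ext_iff.1 hxy
    rw [Submodule.mkQ_apply, Submodule.mkQ_apply] at h1
    have h2 : (rep x - w0) - (rep y - w0) ∈ M := (Submodule.Quotient.eq M).1 h1
    have h3 : rep x - rep y ∈ M := by
      have e' : rep x - w0 - (rep y - w0) = rep x - rep y := by abel
      rwa [e'] at h2
    apply Subtype.ext
    by_contra hne
    have hd' := hdist ↑x x.2 ↑y y.2 hne
    have h4 : rep x - rep y ∈ Cp ⊔ Ksub n T :=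
      (sup_le_sup_left inf_le_left Cp : M ≤ Cp ⊔ Ksub n T) h3
    obtain ⟨c, hc, u, hu, hcu⟩ := Submodule.mem_sup.1 h4
    have hmu : (Submodule.Quotient.mk u : Vn n ⧸ Cp) = ↑x - ↑y := by
      have hu' : u = rep x - rep y - c := by rw [← hcu]; abel
      rw [hu', Submodule.Quotient.mk_sub, Submodule.Quotient.mk_sub, hrepx x, hrepx y,
        (Submodule.Quotient.mk_eq_zero Cp).2 hc, sub_zero]
    have h5 : qdist Cp ↑x ↑y ≤ wQ u := by
      unfold qdist qnorm
      exact Nat.sInf_le ⟨u, hmu, rfl⟩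
    have h6 := wQ_le_card_of_mem_Ksub hu
    omega
  have hcount : Nat.card Ω ≤ Nat.card ↥(N.map M.mkQ) :=
    Nat.card_le_card_of_injective φ hφ
  letI hfin : Fintype ↥(N.map M.mkQ) := Fintype.ofFinite _
  have hcard2 : Nat.card ↥(N.map M.mkQ)
      = 2 ^ Module.finrank (ZMod 2) ↥(N.map M.mkQ) := by
    rw [Nat.card_eq_fintype_card, Module.card_eq_pow_finrank (K := ZMod 2), ZMod.card]
  have hl2 : l ≤ Module.finrank (ZMod 2) ↥(N.map M.mkQ) := by
    have hpow : (2:ℕ) ^ l ≤ 2 ^ Module.finrank (ZMod 2) ↥(N.map M.mkQ) := by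
      rw [← hcard2, ← hcard]
      exact hcount
    exact (Nat.pow_le_pow_iff_right (by norm_num)).1 hpow
  have hrn : Module.finrank (ZMod 2) ↥(N.map M.mkQ) + Module.finrank (ZMod 2) M
      = Module.finrank (ZMod 2) N := by
    have h1 := LinearMap.finrank_range_add_finrank_ker (M.mkQ.comp N.subtype)
    have hr : LinearMap.range (M.mkQ.comp N.subtype) = N.map M.mkQ := by
      rw [LinearMap.range_comp, Submodule.range_subtype]
    have hk2 : LinearMap.ker (M.mkQ.comp N.subtype) = M.comap N.subtype := by
      rw [LinearMap.ker_comp, Submodule.ker_mkQ]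
    have he : Module.finrank (ZMod 2) ↥(M.comap N.subtype) = Module.finrank (ZMod 2) M :=
      (Submodule.comapSubtypeEquivOfLe hMN).finrank_eq
    rw [hr, hk2, he] at h1
    exact h1
  have E2 : Cp ⊓ (Ksub n T ⊓ N) = Ksub n T ⊓ W := by
    apply le_antisymm
    · intro v hv
      rw [Submodule.mem_inf, Submodule.mem_inf] at hv
      obtain ⟨hv1, hv2, -⟩ := hv
      have hwv : wQ v ≤ T.card := wQ_le_card_of_mem_Ksub hv2
      exact Submodule.mem_inf.2 ⟨hv2, hlowW v hv1 (le_trans hwv hT)⟩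
    · intro v hv
      rw [Submodule.mem_inf] at hv
      obtain ⟨hv1, hv2⟩ := hv
      exact Submodule.mem_inf.2 ⟨hWCp hv2, Submodule.mem_inf.2 ⟨hv1, hWN hv2⟩⟩
  have E1 : Module.finrank (ZMod 2) M + Module.finrank (ZMod 2) ↥(Ksub n T ⊓ W)
      = Module.finrank (ZMod 2) Cp + Module.finrank (ZMod 2) ↥(Ksub n T ⊓ N) := by
    have := Submodule.finrank_sup_add_finrank_inf_eq Cp (Ksub n T ⊓ N)
    rw [E2] at this
    exact this
  have E3 : Ksub n T ⊓ N
      = sympOrtho ((Ksub n Tᶜ ⊔ W : Submodule (ZMod 2) (Vn n)) : Set (Vn n)) := by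
    rw [sympOrtho_sup, sympOrtho_Ksub, compl_compl, ← hNW]
  have E3' : Module.finrank (ZMod 2) ↥(Ksub n Tᶜ ⊔ W)
      + Module.finrank (ZMod 2) ↥(Ksub n T ⊓ N) = n + n := by
    rw [E3]
    exact finrank_add_finrank_sympOrtho _
  have E4 : Module.finrank (ZMod 2) ↥(Ksub n Tᶜ ⊔ W) + Module.finrank (ZMod 2) ↥(Ksub n Tᶜ ⊓ W)
      = Module.finrank (ZMod 2) (Ksub n Tᶜ) + Module.finrank (ZMod 2) W :=
    Submodule.finrank_sup_add_finrank_inf_eq (Ksub n Tᶜ) W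
  have E5 := finrank_Ksub_add_compl T
  have E6 : Module.finrank (ZMod 2) W + Module.finrank (ZMod 2) N = n + n := by
    rw [hNW]
    exact finrank_add_finrank_sympOrtho W
  omega

/-- **Quantum Singleton bound for quotient space quantum codes.**
Let `d ≥ 1`, `n ≡ k (mod 2)`, `l` even, `C ⊆ C^⊥ₛ` with `dim C = n - k`. Assume either
`k ≥ 1` and `d ≤ d_m = min{w_Q(v) : v ∈ C^⊥ₛ \ C}`, or `k = 0` and `l ≥ 2`. If
`Ω ⊆ V ⧸ C^⊥ₛ` has `2^l` cosets, pairwise quotient distances `≥ d`, and all elements of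
its cosets lie in one coset of `C(d-1)^⊥ₛ`, then `n ≥ k + l + 2d - 2`. -/
theorem quantum_singleton_bound (n k l d : ℕ) (hn : 0 < n) (hk : k ≤ n) (hd : 1 ≤ d)
    (hparity : n % 2 = k % 2) (hleven : l % 2 = 0)
    (C : Submodule (ZMod 2) (Vn n)) (hself : C ≤ sympOrtho (C : Set (Vn n)))
    (hC : Module.finrank (ZMod 2) C = n - k)
    (hcase : (1 ≤ k ∧ d ≤ sInf {w | ∃ v : Vn n,
        v ∈ sympOrtho (C : Set (Vn n)) ∧ v ∉ C ∧ wQ v = w}) ∨ (k = 0 ∧ 2 ≤ l))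
    (Ω : Set (Vn n ⧸ sympOrtho (C : Set (Vn n)))) (hcard : Nat.card Ω = 2 ^ l)
    (hdist : ∀ x ∈ Ω, ∀ y ∈ Ω, x ≠ y → d ≤ qdist (sympOrtho (C : Set (Vn n))) x y)
    (hcoset : ∃ w : Vn n, ∀ v : Vn n,
      (Submodule.Quotient.mk v : Vn n ⧸ sympOrtho (C : Set (Vn n))) ∈ Ω →
        v - w ∈ sympOrtho {c : Vn n | c ∈ C ∧ wQ c ≤ d - 1}) :
    k + l + 2 * d ≤ n + 2 := by
  classical
  obtain ⟨w0, hw0⟩ := hcoset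
  have hCp : Module.finrank (ZMod 2) (sympOrtho (C : Set (Vn n))) = n + k := by
    have h := finrank_add_finrank_sympOrtho C
    rw [hC] at h
    omega
  have hwQle : ∀ v : Vn n, wQ v ≤ n := by
    intro v
    calc wQ v ≤ (Finset.univ : Finset (Fin n)).card := Finset.card_filter_le _ _
    _ = n := by simp
  have hlow : ∀ v : Vn n, v ∈ sympOrtho (C : Set (Vn n)) → wQ v ≤ d - 1 → v ∈ C := by
    rcases hcase with ⟨hk1, hdm⟩ | ⟨hk0, hl2⟩
    · intro v hv hwv
      by_contra hvc
      have h1 : sInf {w | ∃ v : Vn n, v ∈ sympOrtho (C : Set (Vn n)) ∧ v ∉ C ∧ wQ v = w}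
          ≤ wQ v := Nat.sInf_le ⟨v, hv, hvc, rfl⟩
      omega
    · have hCeq : C = sympOrtho (C : Set (Vn n)) := by
        apply Submodule.eq_of_le_of_finrank_le hself
        rw [hC, hCp, hk0]
        omega
      intro v hv _
      rw [hCeq]
      exact hv
  have hdn : d ≤ n := by
    rcases hcase with ⟨hk1, hdm⟩ | ⟨hk0, hl2⟩
    · have hne : ∃ v : Vn n, v ∈ sympOrtho (C : Set (Vn n)) ∧ v ∉ C := by
        by_contra hco
        push_neg at hco
        have heq : sympOrtho (C : Set (Vn n)) = C := le_antisymm hco hself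
        have h2 : Module.finrank (ZMod 2) (sympOrtho (C : Set (Vn n)))
            = Module.finrank (ZMod 2) C := by rw [heq]
        rw [hC, hCp] at h2
        omega
      obtain ⟨v, hv, hvc⟩ := hne
      have h1 : d ≤ wQ v := hdm.trans (Nat.sInf_le ⟨v, hv, hvc, rfl⟩)
      have h2 := hwQle v
      omega
    · have h2 : 1 < Nat.card Ω := by
        rw [hcard]
        have : (2:ℕ)^1 ≤ 2^l := Nat.pow_le_pow_right (by norm_num) (by omega)
        omega
      have hnt : Nontrivial Ω := Finite.one_lt_card_iff_nontrivial.1 h2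
      obtain ⟨⟨x, hx⟩, ⟨y, hy⟩, hxy⟩ := hnt.exists_pair_ne
      have hxyne : x ≠ y := fun h => hxy (Subtype.ext h)
      have hdle := hdist x hx y hy hxyne
      obtain ⟨v, hv⟩ := Submodule.Quotient.mk_surjective (sympOrtho (C : Set (Vn n))) (x - y)
      have h3 : qdist (sympOrtho (C : Set (Vn n))) x y ≤ wQ v := by
        unfold qdist qnorm
        exact Nat.sInf_le ⟨v, hv, rfl⟩
      have h4 := hwQle v
      omega
  -- instantiate the key bound
  set S₀ : Set (Vn n) := {c : Vn n | c ∈ C ∧ wQ c ≤ d - 1} with hS₀def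
  have key : ∀ T : Finset (Fin n), T.card ≤ d - 1 →
      l + k + Module.finrank (ZMod 2) (Ksub n T)
        + Module.finrank (ZMod 2) ↥(Ksub n Tᶜ ⊓ Submodule.span (ZMod 2) S₀)
        ≤ n + Module.finrank (ZMod 2) ↥(Ksub n T ⊓ Submodule.span (ZMod 2) S₀) := by
    intro T hT
    refine key_aux k l (d - 1) (sympOrtho (C : Set (Vn n))) (sympOrtho S₀)
      (Submodule.span (ZMod 2) S₀) (sympOrtho_span S₀)
      (sympOrtho_anti (fun c hc => hc.1))
      ((Submodule.span_le.2 (fun c hc => hc.1)).trans hself) hCp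
      (fun v hv hwv => Submodule.subset_span ⟨hlow v hv hwv, hwv⟩)
      Ω hcard (fun x hx y hy hne => by have := hdist x hx y hy hne; omega)
      w0 hw0 T hT
  by_cases hbig : 2 * (d - 1) ≤ n
  · have hdn1 : d - 1 ≤ n := by omega
    have hex : (Finset.univ.filter fun s : Finset (Fin n) => s.card = d - 1).Nonempty := by
      obtain ⟨t, -, ht⟩ := Finset.exists_subset_card_eq
        (s := (Finset.univ : Finset (Fin n))) (n := d - 1) (by simpa using hdn1)
      exact ⟨t, by simp [ht]⟩
    obtain ⟨T, hTmem, hTmin⟩ := Finset.exists_min_image _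
      (fun s : Finset (Fin n) =>
        Module.finrank (ZMod 2) ↥(Ksub n s ⊓ Submodule.span (ZMod 2) S₀)) hex
    have hTcard : T.card = d - 1 := by simpa using (Finset.mem_filter.1 hTmem).2
    obtain ⟨T', hT'sub, hT'card⟩ : ∃ t ⊆ Tᶜ, t.card = d - 1 :=
      Finset.exists_subset_card_eq (by rw [Finset.card_compl, hTcard, Fintype.card_fin]; omega)
    have hmono : Module.finrank (ZMod 2) ↥(Ksub n T' ⊓ Submodule.span (ZMod 2) S₀)
        ≤ Module.finrank (ZMod 2) ↥(Ksub n Tᶜ ⊓ Submodule.span (ZMod 2) S₀) :=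
      Submodule.finrank_mono (inf_le_inf (Ksub_mono hT'sub) le_rfl)
    have hminT' := hTmin T' (by simp [hT'card])
    have hKTrank := le_finrank_Ksub T
    have hkey := key T (le_of_eq hTcard)
    omega
  · have hdn1 : d - 1 ≤ n := by omega
    obtain ⟨T, -, hTcard⟩ := Finset.exists_subset_card_eq
      (s := (Finset.univ : Finset (Fin n))) (n := d - 1) (by simpa using hdn1)
    have h1 := key T (le_of_eq hTcard)
    have hTc : Tᶜ.card ≤ d - 1 := by rw [Finset.card_compl, hTcard, Fintype.card_fin]; omega
    have h2 := key Tᶜ hTc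
    rw [compl_compl] at h2
    have h3 := finrank_Ksub_add_compl T
    have hkl : 1 ≤ k ∨ 2 ≤ l := by
      rcases hcase with ⟨h, -⟩ | ⟨-, h⟩
      exacts [Or.inl h, Or.inr h]
    omega
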